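/- Let $u_M^-, u_M^+ : \mathbb{R} \to \mathbb{R}$ satisfy $u_M^- \le u_M^+$ pointwise with $u_M^-, u_M^+ \in BV(\mathbb{R})$, and let $\pi(x, u)$ denote the projection of $u$ onto $[u_M^-(x), u_M^+(x)]$. Then for any $w \in BV(\mathbb{R})$, the map $x \mapsto \pi(x, w(x))$ belongs to $BV(\mathbb{R})$, and $TV(\pi(\cdot, w(\cdot))) \le TV(w) + TV(u_M^-) + TV(u_M^+)$. -/

import Mathlib

lemma key_edist (a b c a' b' c' : ℝ) :
    edist (min (max a b) c) (min (max a' b') c') ≤ edist a a' + edist b b' + edist c c' := by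
  rw [edist_dist, edist_dist, edist_dist, edist_dist,
    ← ENNReal.ofReal_add dist_nonneg dist_nonneg,
    ← ENNReal.ofReal_add (by positivity) dist_nonneg]
  apply ENNReal.ofReal_le_ofReal
  simp only [Real.dist_eq]
  calc |min (max a b) c - min (max a' b') c'|
      ≤ max |max a b - max a' b'| |c - c'| := abs_min_sub_min_le_max _ _ _ _
    _ ≤ |max a b - max a' b'| + |c - c'| :=
        max_le (le_add_of_nonneg_right (abs_nonneg _)) (le_add_of_nonneg_left (abs_nonneg _))
    _ ≤ (|a - a'| + |b - b'|) + |c - c'| := by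
        gcongr
        exact (abs_max_sub_max_le_max _ _ _ _).trans
          (max_le (le_add_of_nonneg_right (abs_nonneg _)) (le_add_of_nonneg_left (abs_nonneg _)))

theorem stmt5 (uMm uMp w : ℝ → ℝ) (h : ∀ x, uMm x ≤ uMp x)
    (hm : eVariationOn uMm Set.univ ≠ ⊤) (hp : eVariationOn uMp Set.univ ≠ ⊤)
    (hw : eVariationOn w Set.univ ≠ ⊤) :
    eVariationOn (fun x => min (max (w x) (uMm x)) (uMp x)) Set.univ ≤
      eVariationOn w Set.univ + eVariationOn uMm Set.univ + eVariationOn uMp Set.univ := by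
  rw [eVariationOn]
  apply iSup_le
  rintro ⟨n, u, hu, us⟩
  simp only
  calc ∑ i ∈ Finset.range n,
        edist (min (max (w (u (i+1))) (uMm (u (i+1)))) (uMp (u (i+1))))
          (min (max (w (u i)) (uMm (u i))) (uMp (u i)))
      ≤ ∑ i ∈ Finset.range n,
          (edist (w (u (i+1))) (w (u i)) + edist (uMm (u (i+1))) (uMm (u i))
            + edist (uMp (u (i+1))) (uMp (u i))) :=
        Finset.sum_le_sum fun i _ => key_edist _ _ _ _ _ _
    _ = (∑ i ∈ Finset.range n, edist (w (u (i+1))) (w (u i)))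
        + (∑ i ∈ Finset.range n, edist (uMm (u (i+1))) (uMm (u i)))
        + (∑ i ∈ Finset.range n, edist (uMp (u (i+1))) (uMp (u i))) := by
        simp [Finset.sum_add_distrib]
    _ ≤ _ := by
        gcongr
        · exact eVariationOn.sum_le (f := w) (n := n) hu us
        · exact eVariationOn.sum_le (f := uMm) (n := n) hu us
        · exact eVariationOn.sum_le (f := uMp) (n := n) hu us
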